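/- Let (φ_i)_{i∈I} and (ψ_j)_{j∈J} be two Parseval (tight with frame bound 1) frames for a Hilbert space H, and let 0 < p ≤ 1. If ‖(⟨φ_i, ψ_j⟩)_{i,j}‖_{Op,p} < ∞, then for every f ∈ H, ∑_i |⟨f, φ_i⟩|^p < ∞ if and only if ∑_j |⟨f, ψ_j⟩|^p < ∞. In other words, the two frames are sparsity equivalent in ℓ_p with respect to any subset of H. -/

import Mathlib

open scoped InnerProductSpace

private lemma aux_sum_rpow {ι : Type*} (g : ι → ENNReal) {p : ℝ} (hp0 : 0 < p) (hp1 : p ≤ 1)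
    (s : Finset ι) : (∑ i ∈ s, g i) ^ p ≤ ∑ i ∈ s, g i ^ p := by
  classical
  induction s using Finset.cons_induction with
  | empty => simp [ENNReal.zero_rpow_of_pos hp0]
  | cons a s ha ih =>
      rw [Finset.sum_cons, Finset.sum_cons]
      refine (ENNReal.rpow_add_le_add_rpow _ _ hp0.le hp1).trans ?_
      gcongr

private lemma aux_tsum_rpow {ι : Type*} (g : ι → ENNReal) {p : ℝ} (hp0 : 0 < p) (hp1 : p ≤ 1) :
    (∑' i, g i) ^ p ≤ ∑' i, g i ^ p := by
  rw [ENNReal.tsum_eq_iSup_sum]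
  have hmap : (⨆ s : Finset ι, ∑ i ∈ s, g i) ^ p = ⨆ s : Finset ι, (∑ i ∈ s, g i) ^ p :=
    OrderIso.map_iSup (ENNReal.orderIsoRpow p hp0) _
  rw [hmap]
  exact iSup_le fun s => (aux_sum_rpow g hp0 hp1 s).trans (ENNReal.sum_le_tsum s)

private lemma aux_enorm {ι : Type*} {c : ι → ℂ} {s : ℂ} (h : HasSum c s) :
    (‖s‖₊ : ENNReal) ≤ ∑' i, (‖c i‖₊ : ENNReal) := by
  by_cases htop : ∑' i, (‖c i‖₊ : ENNReal) = ⊤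
  · simp [htop]
  · have hsum : Summable fun i => ‖c i‖₊ := by
      rwa [← ENNReal.tsum_coe_ne_top_iff_summable]
    rw [← ENNReal.coe_tsum hsum]
    exact_mod_cast h.tsum_eq ▸ nnnorm_tsum_le hsum

private lemma aux_coe_rpow {E : Type*} [NormedAddCommGroup E] (x : E) {p : ℝ} (hp0 : 0 < p) :
    (‖x‖₊ : ENNReal) ^ p = ENNReal.ofReal (‖x‖ ^ p) := by
  rw [← enorm_eq_nnnorm, ← ofReal_norm, ← ENNReal.ofReal_rpow_of_nonneg (norm_nonneg _) hp0.le]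

private lemma aux_ne_top {ι E : Type*} [NormedAddCommGroup E] {x : ι → E} {p : ℝ} (hp0 : 0 < p)
    (h : Summable fun i => ‖x i‖ ^ p) : ∑' i, (‖x i‖₊ : ENNReal) ^ p ≠ ⊤ := by
  simp_rw [aux_coe_rpow _ hp0]
  rw [← ENNReal.ofReal_tsum_of_nonneg (fun i => Real.rpow_nonneg (norm_nonneg _) p) h]
  exact ENNReal.ofReal_ne_top

private lemma aux_summable_of_ne_top {ι E : Type*} [NormedAddCommGroup E] {x : ι → E} {p : ℝ}
    (hp0 : 0 < p) (h : ∑' i, (‖x i‖₊ : ENNReal) ^ p ≠ ⊤) : Summable fun i => ‖x i‖ ^ p := by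
  simp_rw [aux_coe_rpow _ hp0] at h
  have := ENNReal.summable_toReal h
  simpa [ENNReal.toReal_ofReal (Real.rpow_nonneg (norm_nonneg _) p)] using this

private lemma aux_tsum_le {ι E : Type*} [NormedAddCommGroup E] {x : ι → E} {p C : ℝ} (hp0 : 0 < p)
    (hs : Summable fun i => ‖x i‖ ^ p) (hC : ∑' i, ‖x i‖ ^ p ≤ C) :
    ∑' i, (‖x i‖₊ : ENNReal) ^ p ≤ ENNReal.ofReal C := by
  simp_rw [aux_coe_rpow _ hp0]
  rw [← ENNReal.ofReal_tsum_of_nonneg (fun i => Real.rpow_nonneg (norm_nonneg _) p) hs]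
  exact ENNReal.ofReal_le_ofReal hC

private lemma key {H : Type*} [NormedAddCommGroup H] [InnerProductSpace ℂ H] [CompleteSpace H]
    {I J : Type*} {p B : ℝ} (hp0 : 0 < p) (hp1 : p ≤ 1) (φ : I → H) (ψ : J → H)
    (hφ : ∀ f : H, HasSum (fun i => ⟪f, φ i⟫_ℂ • φ i) f)
    (hrowS : ∀ i, Summable fun j => ‖⟪φ i, ψ j⟫_ℂ‖ ^ p)
    (hrow : ∀ i, ∑' j, ‖⟪φ i, ψ j⟫_ℂ‖ ^ p ≤ B ^ p)
    (f : H) (hf : Summable fun i => ‖⟪f, φ i⟫_ℂ‖ ^ p) :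
    Summable fun j => ‖⟪f, ψ j⟫_ℂ‖ ^ p := by
  set a : I → ENNReal := fun i => (‖⟪f, φ i⟫_ℂ‖₊ : ENNReal) ^ p with ha
  set m : I → J → ENNReal := fun i j => (‖⟪φ i, ψ j⟫_ℂ‖₊ : ENNReal) ^ p with hm
  have hbound : ∀ j, (‖⟪f, ψ j⟫_ℂ‖₊ : ENNReal) ^ p ≤ ∑' i, a i * m i j := by
    intro j
    have hS : HasSum (fun i => ⟪f, φ i⟫_ℂ * ⟪ψ j, φ i⟫_ℂ) ⟪ψ j, f⟫_ℂ := by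
      have := (innerSL ℂ (ψ j)).hasSum (hφ f)
      simpa [inner_smul_right] using this
    have h1 : (‖⟪ψ j, f⟫_ℂ‖₊ : ENNReal) ≤ ∑' i, (‖⟪f, φ i⟫_ℂ * ⟪ψ j, φ i⟫_ℂ‖₊ : ENNReal) :=
      aux_enorm hS
    have h4 : (‖⟪f, ψ j⟫_ℂ‖₊ : ENNReal) = (‖⟪ψ j, f⟫_ℂ‖₊ : ENNReal) := by
      rw [← enorm_eq_nnnorm, ← ofReal_norm, ← enorm_eq_nnnorm, ← ofReal_norm, norm_inner_symm (𝕜 := ℂ)]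
    have h5 : ∀ i, (‖⟪f, φ i⟫_ℂ * ⟪ψ j, φ i⟫_ℂ‖₊ : ENNReal) ^ p = a i * m i j := by
      intro i
      have h6 : (‖⟪ψ j, φ i⟫_ℂ‖₊ : ENNReal) = (‖⟪φ i, ψ j⟫_ℂ‖₊ : ENNReal) := by
        rw [← enorm_eq_nnnorm, ← ofReal_norm, ← enorm_eq_nnnorm, ← ofReal_norm, norm_inner_symm (𝕜 := ℂ)]
      rw [nnnorm_mul, ENNReal.coe_mul, ENNReal.mul_rpow_of_nonneg _ _ hp0.le, h6]
    calc (‖⟪f, ψ j⟫_ℂ‖₊ : ENNReal) ^ p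
        ≤ (∑' i, (‖⟪f, φ i⟫_ℂ * ⟪ψ j, φ i⟫_ℂ‖₊ : ENNReal)) ^ p := by
          rw [h4]; exact ENNReal.rpow_le_rpow h1 hp0.le
      _ ≤ ∑' i, (‖⟪f, φ i⟫_ℂ * ⟪ψ j, φ i⟫_ℂ‖₊ : ENNReal) ^ p := aux_tsum_rpow _ hp0 hp1
      _ = ∑' i, a i * m i j := by simp_rw [h5]
  have hmain : ∑' j, (‖⟪f, ψ j⟫_ℂ‖₊ : ENNReal) ^ p ≤ (∑' i, a i) * ENNReal.ofReal (B ^ p) := by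
    calc ∑' j, (‖⟪f, ψ j⟫_ℂ‖₊ : ENNReal) ^ p
        ≤ ∑' j, ∑' i, a i * m i j := ENNReal.tsum_le_tsum hbound
      _ = ∑' i, ∑' j, a i * m i j := ENNReal.tsum_comm
      _ = ∑' i, a i * ∑' j, m i j := by simp_rw [ENNReal.tsum_mul_left]
      _ ≤ ∑' i, a i * ENNReal.ofReal (B ^ p) :=
          ENNReal.tsum_le_tsum fun i =>
            mul_le_mul_right (aux_tsum_le hp0 (hrowS i) (hrow i)) _
      _ = (∑' i, a i) * ENNReal.ofReal (B ^ p) := ENNReal.tsum_mul_right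
  have hane : ∑' i, a i ≠ ⊤ := aux_ne_top hp0 hf
  exact aux_summable_of_ne_top hp0
    (ne_top_of_le_ne_top (ENNReal.mul_ne_top hane ENNReal.ofReal_ne_top) hmain)

/-- Two Parseval frames whose cross-Grammian matrix has finite `Op,p` norm are
sparsity equivalent in `ℓ_p`: for every `f ∈ H`, the `φ`-coefficient sequence lies in
`ℓ_p` iff the `ψ`-coefficient sequence does. -/
theorem stmt4 {H : Type*} [NormedAddCommGroup H] [InnerProductSpace ℂ H] [CompleteSpace H]
    {I J : Type*} [Countable I] [Countable J] (p B : ℝ) (hp0 : 0 < p) (hp1 : p ≤ 1)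
    (φ : I → H) (ψ : J → H)
    (hφ : ∀ f : H, HasSum (fun i => ⟪f, φ i⟫_ℂ • φ i) f)
    (hψ : ∀ f : H, HasSum (fun j => ⟪f, ψ j⟫_ℂ • ψ j) f)
    (hrowSummable : ∀ i, Summable fun j => ‖⟪φ i, ψ j⟫_ℂ‖ ^ p)
    (hcolSummable : ∀ j, Summable fun i => ‖⟪φ i, ψ j⟫_ℂ‖ ^ p)
    (hrow : ∀ i, ∑' j, ‖⟪φ i, ψ j⟫_ℂ‖ ^ p ≤ B ^ p)
    (hcol : ∀ j, ∑' i, ‖⟪φ i, ψ j⟫_ℂ‖ ^ p ≤ B ^ p) :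
    ∀ f : H, (Summable fun i => ‖⟪f, φ i⟫_ℂ‖ ^ p) ↔ (Summable fun j => ‖⟪f, ψ j⟫_ℂ‖ ^ p) := by
  intro f
  have hsymm : ∀ (j : J) (i : I), ‖⟪ψ j, φ i⟫_ℂ‖ = ‖⟪φ i, ψ j⟫_ℂ‖ := by
    intro j i; exact norm_inner_symm (ψ j) (φ i)
  constructor
  · exact key hp0 hp1 φ ψ hφ hrowSummable hrow f
  · intro h
    refine key (B := B) hp0 hp1 ψ φ hψ (fun j => ?_) (fun j => ?_) f h
    · simpa [hsymm] using hcolSummable j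
    · simpa [hsymm] using hcol j
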